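/- If μ and λ are consistent probability measures on 𝒳_A and 𝒳_B respectively (i.e. they induce the same marginal over 𝒳_{A∩B}), then there exists a probability measure α on 𝒳_{A∪B} such that the marginal of α over A is μ, the marginal of α over B is λ, and under α, X_{A∖B} is conditionally independent of X_{B∖A} given X_{A∩B}. -/

import Mathlib

open MeasureTheory ProbabilityTheory

section MarkovCombinationAux

variable {ι : Type*} (X : ι → Type*) [∀ i, MeasurableSpace (X i)] (A B : Set ι)

open Classical in
/-- Splitting `𝒳_A` as `𝒳_{A∩B} × 𝒳_{A∖B}`. -/
noncomputable def mcSplitA : (∀ i : A, X i) ≃ᵐ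
    (∀ i : (A ∩ B : Set ι), X i) × (∀ i : (A \ B : Set ι), X i) where
  toFun x := (fun i => x ⟨i.1, i.2.1⟩, fun i => x ⟨i.1, i.2.1⟩)
  invFun p i := if h : (i : ι) ∈ B then p.1 ⟨i.1, ⟨i.2, h⟩⟩ else p.2 ⟨i.1, ⟨i.2, h⟩⟩
  left_inv x := by
    funext i
    dsimp only
    by_cases h : (i : ι) ∈ B
    · exact dif_pos h
    · exact dif_neg h
  right_inv p := by
    refine Prod.ext ?_ ?_
    · funext i; dsimp only; exact dif_pos i.2.2
    · funext i; dsimp only; exact dif_neg i.2.2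
  measurable_toFun :=
    (measurable_pi_lambda _ fun _ => measurable_pi_apply _).prodMk
      (measurable_pi_lambda _ fun _ => measurable_pi_apply _)
  measurable_invFun := by
    apply measurable_pi_lambda
    intro i
    dsimp only [Equiv.coe_fn_symm_mk]
    by_cases h : (i : ι) ∈ B
    · simp only [dif_pos h]
      exact (measurable_pi_apply _).comp measurable_fst
    · simp only [dif_neg h]
      exact (measurable_pi_apply _).comp measurable_snd

open Classical in
/-- Splitting `𝒳_B` as `𝒳_{A∩B} × 𝒳_{B∖A}`. -/
noncomputable def mcSplitB : (∀ i : B, X i) ≃ᵐ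
    (∀ i : (A ∩ B : Set ι), X i) × (∀ i : (B \ A : Set ι), X i) where
  toFun x := (fun i => x ⟨i.1, i.2.2⟩, fun i => x ⟨i.1, i.2.1⟩)
  invFun p i := if h : (i : ι) ∈ A then p.1 ⟨i.1, ⟨h, i.2⟩⟩ else p.2 ⟨i.1, ⟨i.2, h⟩⟩
  left_inv x := by
    funext i
    dsimp only
    by_cases h : (i : ι) ∈ A
    · exact dif_pos h
    · exact dif_neg h
  right_inv p := by
    refine Prod.ext ?_ ?_
    · funext i; dsimp only; exact dif_pos i.2.1
    · funext i; dsimp only; exact dif_neg i.2.2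
  measurable_toFun :=
    (measurable_pi_lambda _ fun _ => measurable_pi_apply _).prodMk
      (measurable_pi_lambda _ fun _ => measurable_pi_apply _)
  measurable_invFun := by
    apply measurable_pi_lambda
    intro i
    dsimp only [Equiv.coe_fn_symm_mk]
    by_cases h : (i : ι) ∈ A
    · simp only [dif_pos h]
      exact (measurable_pi_apply _).comp measurable_fst
    · simp only [dif_neg h]
      exact (measurable_pi_apply _).comp measurable_snd

open Classical in
/-- Splitting `𝒳_{A∪B}` as `𝒳_{A∩B} × (𝒳_{A∖B} × 𝒳_{B∖A})`. -/
noncomputable def mcSplitW : (∀ i : (A ∪ B : Set ι), X i) ≃ᵐ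
    (∀ i : (A ∩ B : Set ι), X i) ×
      ((∀ i : (A \ B : Set ι), X i) × (∀ i : (B \ A : Set ι), X i)) where
  toFun x := (fun i => x ⟨i.1, Or.inl i.2.1⟩,
    (fun i => x ⟨i.1, Or.inl i.2.1⟩, fun i => x ⟨i.1, Or.inr i.2.1⟩))
  invFun p i :=
    if hA : (i : ι) ∈ A then
      (if hB : (i : ι) ∈ B then p.1 ⟨i.1, ⟨hA, hB⟩⟩ else p.2.1 ⟨i.1, ⟨hA, hB⟩⟩)
    else p.2.2 ⟨i.1, ⟨i.2.resolve_left hA, hA⟩⟩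
  left_inv x := by
    funext i
    dsimp only
    by_cases hA : (i : ι) ∈ A
    · by_cases hB : (i : ι) ∈ B
      · rw [dif_pos hA, dif_pos hB]
      · rw [dif_pos hA, dif_neg hB]
    · rw [dif_neg hA]
  right_inv p := by
    refine Prod.ext ?_ (Prod.ext ?_ ?_)
    · funext i; dsimp only; rw [dif_pos i.2.1, dif_pos i.2.2]
    · funext i; dsimp only; rw [dif_pos i.2.1, dif_neg i.2.2]
    · funext i; dsimp only; rw [dif_neg i.2.2]
  measurable_toFun :=
    (measurable_pi_lambda _ fun _ => measurable_pi_apply _).prodMk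
      ((measurable_pi_lambda _ fun _ => measurable_pi_apply _).prodMk
        (measurable_pi_lambda _ fun _ => measurable_pi_apply _))
  measurable_invFun := by
    apply measurable_pi_lambda
    intro i
    dsimp only [Equiv.coe_fn_symm_mk]
    by_cases hA : (i : ι) ∈ A
    · by_cases hB : (i : ι) ∈ B
      · simp only [dif_pos hA, dif_pos hB]
        exact (measurable_pi_apply _).comp measurable_fst
      · simp only [dif_pos hA, dif_neg hB]
        exact (measurable_pi_apply _).comp (measurable_fst.comp measurable_snd)
    · simp only [dif_neg hA]
      exact (measurable_pi_apply _).comp (measurable_snd.comp measurable_snd)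

end MarkovCombinationAux

/-- Existence of the Markov combination of two consistent probability measures:
there is a probability measure on `𝒳_{A ∪ B}` with marginal `μ` over `A`, marginal `λ`
over `B`, under which `X_{A∖B}` and `X_{B∖A}` are conditionally independent given
`X_{A∩B}`. -/
theorem markov_combination_exists
    {ι : Type*} [Countable ι] (X : ι → Type*) [∀ i, MeasurableSpace (X i)]
    [∀ i, StandardBorelSpace (X i)]
    (A B : Set ι)
    (μ : Measure (∀ i : A, X i)) (lam : Measure (∀ i : B, X i))
    [IsProbabilityMeasure μ] [IsProbabilityMeasure lam]
    (hconsist :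
      μ.map (fun x (i : (A ∩ B : Set ι)) => x (Set.inclusion Set.inter_subset_left i))
        = lam.map (fun x (i : (A ∩ B : Set ι)) => x (Set.inclusion Set.inter_subset_right i))) :
    ∃ α : Measure (∀ i : (A ∪ B : Set ι), X i), ∃ _ : IsProbabilityMeasure α,
      α.map (fun x (i : A) => x (Set.inclusion Set.subset_union_left i)) = μ ∧
      α.map (fun x (i : B) => x (Set.inclusion Set.subset_union_right i)) = lam ∧
      CondIndepFun
        (MeasurableSpace.comap
          (fun x : (∀ i : (A ∪ B : Set ι), X i) => fun i : (A ∩ B : Set ι) =>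
            x (Set.inclusion (Set.inter_subset_left.trans Set.subset_union_left) i))
          inferInstance)
        (Measurable.comap_le (measurable_pi_lambda _ fun _ => measurable_pi_apply _))
        (fun x (i : (A \ B : Set ι)) =>
          x (Set.inclusion ((Set.diff_subset).trans Set.subset_union_left) i))
        (fun x (i : (B \ A : Set ι)) =>
          x (Set.inclusion ((Set.diff_subset).trans Set.subset_union_right) i))
        α := by
  classical
  have hAne : Nonempty (∀ i : A, X i) := by
    by_contra h
    rw [not_nonempty_iff] at h
    exact IsProbabilityMeasure.ne_zero μ μ.eq_zero_of_isEmpty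
  have hBne : Nonempty (∀ i : B, X i) := by
    by_contra h
    rw [not_nonempty_iff] at h
    exact IsProbabilityMeasure.ne_zero lam lam.eq_zero_of_isEmpty
  haveI : Nonempty (∀ i : (A \ B : Set ι), X i) := ⟨fun i => hAne.some ⟨i.1, i.2.1⟩⟩
  haveI : Nonempty (∀ i : (B \ A : Set ι), X i) := ⟨fun i => hBne.some ⟨i.1, i.2.1⟩⟩
  set eA := mcSplitA X A B with heA
  set eB := mcSplitB X A B with heB
  set eW := mcSplitW X A B with heW
  set μ' := μ.map eA with hμ'def
  set lam' := lam.map eB with hlam'def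
  haveI : IsProbabilityMeasure μ' := Measure.isProbabilityMeasure_map eA.measurable.aemeasurable
  haveI : IsProbabilityMeasure lam' := Measure.isProbabilityMeasure_map eB.measurable.aemeasurable
  set ν := μ'.fst with hνdef
  haveI : IsProbabilityMeasure ν := by rw [hνdef]; infer_instance
  have hνB : lam'.fst = ν := by
    rw [hνdef, hμ'def, hlam'def,
      show (μ.map eA).fst = (μ.map eA).map Prod.fst from rfl,
      show (lam.map eB).fst = (lam.map eB).map Prod.fst from rfl,
      Measure.map_map measurable_fst eA.measurable,
      Measure.map_map measurable_fst eB.measurable]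
    calc lam.map (Prod.fst ∘ eB)
        = lam.map (fun x (i : (A ∩ B : Set ι)) =>
            x (Set.inclusion Set.inter_subset_right i)) := rfl
      _ = μ.map (fun x (i : (A ∩ B : Set ι)) =>
            x (Set.inclusion Set.inter_subset_left i)) := hconsist.symm
      _ = μ.map (Prod.fst ∘ eA) := rfl
  set κ := μ'.condKernel with hκdef
  set η := lam'.condKernel with hηdef
  set ρ := ν ⊗ₘ (κ ×ₖ η) with hρdef
  haveI : IsProbabilityMeasure ρ := by rw [hρdef]; infer_instance
  set αm := ρ.map (eW.symm) with hαdef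
  haveI : IsProbabilityMeasure αm := Measure.isProbabilityMeasure_map eW.symm.measurable.aemeasurable
  have hρfst : ρ.fst = ν := by rw [hρdef]; exact Measure.fst_compProd ν _
  -- maps of ρ to the two partial products
  have hmeas1 : Measurable (fun p : (∀ i : (A ∩ B : Set ι), X i) ×
      ((∀ i : (A \ B : Set ι), X i) × (∀ i : (B \ A : Set ι), X i)) => (p.1, p.2.1)) :=
    measurable_fst.prodMk (measurable_fst.comp measurable_snd)
  have hmeas2 : Measurable (fun p : (∀ i : (A ∩ B : Set ι), X i) ×
      ((∀ i : (A \ B : Set ι), X i) × (∀ i : (B \ A : Set ι), X i)) => (p.1, p.2.2)) :=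
    measurable_fst.prodMk (measurable_snd.comp measurable_snd)
  have h1 : ρ.map (fun p => (p.1, p.2.1)) = ν ⊗ₘ κ := by
    ext s hs
    rw [Measure.map_apply hmeas1 hs, hρdef, Measure.compProd_apply hs,
      Measure.compProd_apply (hmeas1 hs)]
    refine lintegral_congr fun z => ?_
    have hset : (Prod.mk z ⁻¹' ((fun p : ((∀ i : (A ∩ B : Set ι), X i) × ((∀ i : (A \ B : Set ι), X i) × (∀ i : (B \ A : Set ι), X i))) => (p.1, p.2.1)) ⁻¹' s))
        = Prod.fst ⁻¹' (Prod.mk z ⁻¹' s) := rfl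
    rw [hset, Kernel.prod_apply, ← Set.prod_univ, Measure.prod_prod, measure_univ, mul_one]
  have h2 : ρ.map (fun p => (p.1, p.2.2)) = ν ⊗ₘ η := by
    ext s hs
    rw [Measure.map_apply hmeas2 hs, hρdef, Measure.compProd_apply hs,
      Measure.compProd_apply (hmeas2 hs)]
    refine lintegral_congr fun z => ?_
    have hset : (Prod.mk z ⁻¹' ((fun p : ((∀ i : (A ∩ B : Set ι), X i) × ((∀ i : (A \ B : Set ι), X i) × (∀ i : (B \ A : Set ι), X i))) => (p.1, p.2.2)) ⁻¹' s))
        = Prod.snd ⁻¹' (Prod.mk z ⁻¹' s) := rfl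
    rw [hset, Kernel.prod_apply, ← Set.univ_prod, Measure.prod_prod, measure_univ, one_mul]
  have hdisμ : ν ⊗ₘ κ = μ' := μ'.disintegrate μ'.condKernel
  have hdislam : ν ⊗ₘ η = lam' := by rw [← hνB]; exact lam'.disintegrate lam'.condKernel
  -- the restriction maps
  have hrA : Measurable (fun x (i : A) => x (Set.inclusion Set.subset_union_left i) :
      (∀ i : (A ∪ B : Set ι), X i) → ∀ i : A, X i) :=
    measurable_pi_lambda _ fun _ => measurable_pi_apply _
  have hrB : Measurable (fun x (i : B) => x (Set.inclusion Set.subset_union_right i) :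
      (∀ i : (A ∪ B : Set ι), X i) → ∀ i : B, X i) :=
    measurable_pi_lambda _ fun _ => measurable_pi_apply _
  have hrZ : Measurable (fun x : (∀ i : (A ∪ B : Set ι), X i) => fun i : (A ∩ B : Set ι) =>
      x (Set.inclusion (Set.inter_subset_left.trans Set.subset_union_left) i)) :=
    measurable_pi_lambda _ fun _ => measurable_pi_apply _
  have hf : Measurable (fun x (i : (A \ B : Set ι)) =>
      x (Set.inclusion ((Set.diff_subset).trans Set.subset_union_left) i) :
      (∀ i : (A ∪ B : Set ι), X i) → ∀ i : (A \ B : Set ι), X i) :=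
    measurable_pi_lambda _ fun _ => measurable_pi_apply _
  have hg : Measurable (fun x (i : (B \ A : Set ι)) =>
      x (Set.inclusion ((Set.diff_subset).trans Set.subset_union_right) i) :
      (∀ i : (A ∪ B : Set ι), X i) → ∀ i : (B \ A : Set ι), X i) :=
    measurable_pi_lambda _ fun _ => measurable_pi_apply _
  -- composition identities
  have hcompA : ((fun x (i : A) => x (Set.inclusion Set.subset_union_left i)) ∘ ⇑eW.symm)
      = (⇑eA.symm ∘ fun p => (p.1, p.2.1)) := by
    funext p
    simp only [Function.comp_apply]
    apply eA.injective
    rw [MeasurableEquiv.apply_symm_apply]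
    exact congrArg (fun q => (q.1, q.2.1)) (eW.apply_symm_apply p)
  have hcompB : ((fun x (i : B) => x (Set.inclusion Set.subset_union_right i)) ∘ ⇑eW.symm)
      = (⇑eB.symm ∘ fun p => (p.1, p.2.2)) := by
    funext p
    simp only [Function.comp_apply]
    apply eB.injective
    rw [MeasurableEquiv.apply_symm_apply]
    exact congrArg (fun q => (q.1, q.2.2)) (eW.apply_symm_apply p)
  -- marginals
  have hmargA : αm.map (fun x (i : A) => x (Set.inclusion Set.subset_union_left i)) = μ := by
    rw [hαdef, Measure.map_map hrA eW.symm.measurable, hcompA,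
      ← Measure.map_map eA.symm.measurable hmeas1, h1, hdisμ, hμ'def,
      MeasurableEquiv.map_symm_map]
  have hmargB : αm.map (fun x (i : B) => x (Set.inclusion Set.subset_union_right i)) = lam := by
    rw [hαdef, Measure.map_map hrB eW.symm.measurable, hcompB,
      ← Measure.map_map eB.symm.measurable hmeas2, h2, hdislam, hlam'def,
      MeasurableEquiv.map_symm_map]
  -- conditional independence
  refine ⟨αm, inferInstance, hmargA, hmargB, ?_⟩
  rw [condIndepFun_iff_condExp_inter_preimage_eq_mul hf hg]
  intro s t hs ht
  -- identification of the relevant conditional distributions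
  have hmapZ : αm.map (fun x : (∀ i : (A ∪ B : Set ι), X i) => fun i : (A ∩ B : Set ι) =>
      x (Set.inclusion (Set.inter_subset_left.trans Set.subset_union_left) i)) = ν := by
    have hcomp : ((fun x : (∀ i : (A ∪ B : Set ι), X i) => fun i : (A ∩ B : Set ι) =>
        x (Set.inclusion (Set.inter_subset_left.trans Set.subset_union_left) i)) ∘ ⇑eW.symm)
        = Prod.fst := funext fun p => congrArg Prod.fst (eW.apply_symm_apply p)
    rw [hαdef, Measure.map_map hrZ eW.symm.measurable, hcomp,
      show ρ.map Prod.fst = ρ.fst from rfl, hρfst]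
  have hmap_pair : αm.map (fun w => ((fun x : (∀ i : (A ∪ B : Set ι), X i) =>
      fun i : (A ∩ B : Set ι) =>
        x (Set.inclusion (Set.inter_subset_left.trans Set.subset_union_left) i)) w,
      ((fun x (i : (A \ B : Set ι)) =>
          x (Set.inclusion ((Set.diff_subset).trans Set.subset_union_left) i)) w,
        (fun x (i : (B \ A : Set ι)) =>
          x (Set.inclusion ((Set.diff_subset).trans Set.subset_union_right) i)) w))) = ρ := by
    have hid : (fun w => ((fun x : (∀ i : (A ∪ B : Set ι), X i) =>
        fun i : (A ∩ B : Set ι) =>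
          x (Set.inclusion (Set.inter_subset_left.trans Set.subset_union_left) i)) w,
        ((fun x (i : (A \ B : Set ι)) =>
            x (Set.inclusion ((Set.diff_subset).trans Set.subset_union_left) i)) w,
          (fun x (i : (B \ A : Set ι)) =>
            x (Set.inclusion ((Set.diff_subset).trans Set.subset_union_right) i)) w)))
        = ⇑eW := rfl
    rw [hid, hαdef, MeasurableEquiv.map_map_symm]
  have hmapf : αm.map (fun w => ((fun x : (∀ i : (A ∪ B : Set ι), X i) =>
      fun i : (A ∩ B : Set ι) =>
        x (Set.inclusion (Set.inter_subset_left.trans Set.subset_union_left) i)) w,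
      (fun x (i : (A \ B : Set ι)) =>
          x (Set.inclusion ((Set.diff_subset).trans Set.subset_union_left) i)) w)) = ν ⊗ₘ κ := by
    have hcomp : ((fun w => ((fun x : (∀ i : (A ∪ B : Set ι), X i) =>
        fun i : (A ∩ B : Set ι) =>
          x (Set.inclusion (Set.inter_subset_left.trans Set.subset_union_left) i)) w,
        (fun x (i : (A \ B : Set ι)) =>
            x (Set.inclusion ((Set.diff_subset).trans Set.subset_union_left) i)) w)) ∘ ⇑eW.symm)
        = fun p => (p.1, p.2.1) :=
      funext fun p => congrArg (fun q => (q.1, q.2.1)) (eW.apply_symm_apply p)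
    rw [hαdef, Measure.map_map (hrZ.prodMk hf) eW.symm.measurable, hcomp, h1]
  have hmapg : αm.map (fun w => ((fun x : (∀ i : (A ∪ B : Set ι), X i) =>
      fun i : (A ∩ B : Set ι) =>
        x (Set.inclusion (Set.inter_subset_left.trans Set.subset_union_left) i)) w,
      (fun x (i : (B \ A : Set ι)) =>
          x (Set.inclusion ((Set.diff_subset).trans Set.subset_union_right) i)) w)) = ν ⊗ₘ η := by
    have hcomp : ((fun w => ((fun x : (∀ i : (A ∪ B : Set ι), X i) =>
        fun i : (A ∩ B : Set ι) =>
          x (Set.inclusion (Set.inter_subset_left.trans Set.subset_union_left) i)) w,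
        (fun x (i : (B \ A : Set ι)) =>
            x (Set.inclusion ((Set.diff_subset).trans Set.subset_union_right) i)) w)) ∘ ⇑eW.symm)
        = fun p => (p.1, p.2.2) :=
      funext fun p => congrArg (fun q => (q.1, q.2.2)) (eW.apply_symm_apply p)
    rw [hαdef, Measure.map_map (hrZ.prodMk hg) eW.symm.measurable, hcomp, h2]
  have hcd_pair : condDistrib (fun w => ((fun x (i : (A \ B : Set ι)) =>
      x (Set.inclusion ((Set.diff_subset).trans Set.subset_union_left) i)) w,
      (fun x (i : (B \ A : Set ι)) =>
        x (Set.inclusion ((Set.diff_subset).trans Set.subset_union_right) i)) w))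
      (fun x : (∀ i : (A ∪ B : Set ι), X i) => fun i : (A ∩ B : Set ι) =>
        x (Set.inclusion (Set.inter_subset_left.trans Set.subset_union_left) i)) αm
      = ρ.condKernel := by
    rw [condDistrib_def]
    first
      | (congr 1; exact hmap_pair)
      | congr 1
  have hcdf : condDistrib (fun x (i : (A \ B : Set ι)) =>
      x (Set.inclusion ((Set.diff_subset).trans Set.subset_union_left) i))
      (fun x : (∀ i : (A ∪ B : Set ι), X i) => fun i : (A ∩ B : Set ι) =>
        x (Set.inclusion (Set.inter_subset_left.trans Set.subset_union_left) i)) αm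
      = (ν ⊗ₘ κ).condKernel := by
    rw [condDistrib_def]
    first
      | (congr 1; exact hmapf)
      | congr 1
  have hcdg : condDistrib (fun x (i : (B \ A : Set ι)) =>
      x (Set.inclusion ((Set.diff_subset).trans Set.subset_union_right) i))
      (fun x : (∀ i : (A ∪ B : Set ι), X i) => fun i : (A ∩ B : Set ι) =>
        x (Set.inclusion (Set.inter_subset_left.trans Set.subset_union_left) i)) αm
      = (ν ⊗ₘ η).condKernel := by
    rw [condDistrib_def]
    first
      | (congr 1; exact hmapg)
      | congr 1
  -- a.e. identification of disintegration kernels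
  have hκeq : ∀ᵐ z ∂ν, κ z = (ν ⊗ₘ κ).condKernel z := by
    have h := eq_condKernel_of_measure_eq_compProd (ρ := ν ⊗ₘ κ) κ
      (by rw [Measure.fst_compProd])
    rwa [Measure.fst_compProd] at h
  have hηeq : ∀ᵐ z ∂ν, η z = (ν ⊗ₘ η).condKernel z := by
    have h := eq_condKernel_of_measure_eq_compProd (ρ := ν ⊗ₘ η) η
      (by rw [Measure.fst_compProd])
    rwa [Measure.fst_compProd] at h
  have hpair_eq : ∀ᵐ z ∂ν, (κ ×ₖ η) z = ρ.condKernel z := by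
    have h := eq_condKernel_of_measure_eq_compProd (ρ := ρ) (κ ×ₖ η)
      (by rw [hρfst])
    rwa [hρfst] at h
  have hae : ∀ᵐ w ∂αm, κ ((fun x : (∀ i : (A ∪ B : Set ι), X i) =>
        fun i : (A ∩ B : Set ι) =>
          x (Set.inclusion (Set.inter_subset_left.trans Set.subset_union_left) i)) w)
        = (ν ⊗ₘ κ).condKernel ((fun x : (∀ i : (A ∪ B : Set ι), X i) =>
        fun i : (A ∩ B : Set ι) =>
          x (Set.inclusion (Set.inter_subset_left.trans Set.subset_union_left) i)) w)
      ∧ η ((fun x : (∀ i : (A ∪ B : Set ι), X i) =>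
        fun i : (A ∩ B : Set ι) =>
          x (Set.inclusion (Set.inter_subset_left.trans Set.subset_union_left) i)) w)
        = (ν ⊗ₘ η).condKernel ((fun x : (∀ i : (A ∪ B : Set ι), X i) =>
        fun i : (A ∩ B : Set ι) =>
          x (Set.inclusion (Set.inter_subset_left.trans Set.subset_union_left) i)) w)
      ∧ (κ ×ₖ η) ((fun x : (∀ i : (A ∪ B : Set ι), X i) =>
        fun i : (A ∩ B : Set ι) =>
          x (Set.inclusion (Set.inter_subset_left.trans Set.subset_union_left) i)) w)
        = ρ.condKernel ((fun x : (∀ i : (A ∪ B : Set ι), X i) =>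
        fun i : (A ∩ B : Set ι) =>
          x (Set.inclusion (Set.inter_subset_left.trans Set.subset_union_left) i)) w) := by
    refine ae_of_ae_map hrZ.aemeasurable
      (p := fun z => κ z = (ν ⊗ₘ κ).condKernel z ∧ η z = (ν ⊗ₘ η).condKernel z
        ∧ (κ ×ₖ η) z = ρ.condKernel z) ?_
    rw [hmapZ]
    filter_upwards [hκeq, hηeq, hpair_eq] with z h1' h2' h3'
    exact ⟨h1', h2', h3'⟩
  -- conditional expectations via condDistrib
  have e1 := condDistrib_ae_eq_condExp (μ := αm) hrZ (hf.prodMk hg) (hs.prod ht)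
  have e2 := condDistrib_ae_eq_condExp (μ := αm) hrZ hf hs
  have e3 := condDistrib_ae_eq_condExp (μ := αm) hrZ hg ht
  rw [Set.mk_preimage_prod] at e1
  have final : (fun a => (condDistrib (fun w => ((fun x (i : (A \ B : Set ι)) =>
      x (Set.inclusion ((Set.diff_subset).trans Set.subset_union_left) i)) w,
      (fun x (i : (B \ A : Set ι)) =>
        x (Set.inclusion ((Set.diff_subset).trans Set.subset_union_right) i)) w))
      (fun x : (∀ i : (A ∪ B : Set ι), X i) => fun i : (A ∩ B : Set ι) =>
        x (Set.inclusion (Set.inter_subset_left.trans Set.subset_union_left) i)) αm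
      ((fun x : (∀ i : (A ∪ B : Set ι), X i) => fun i : (A ∩ B : Set ι) =>
        x (Set.inclusion (Set.inter_subset_left.trans Set.subset_union_left) i)) a)
      (s ×ˢ t)).toReal)
      =ᵐ[αm] fun a => (condDistrib (fun x (i : (A \ B : Set ι)) =>
        x (Set.inclusion ((Set.diff_subset).trans Set.subset_union_left) i))
        (fun x : (∀ i : (A ∪ B : Set ι), X i) => fun i : (A ∩ B : Set ι) =>
          x (Set.inclusion (Set.inter_subset_left.trans Set.subset_union_left) i)) αm
        ((fun x : (∀ i : (A ∪ B : Set ι), X i) => fun i : (A ∩ B : Set ι) =>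
          x (Set.inclusion (Set.inter_subset_left.trans Set.subset_union_left) i)) a)
        s).toReal * (condDistrib (fun x (i : (B \ A : Set ι)) =>
        x (Set.inclusion ((Set.diff_subset).trans Set.subset_union_right) i))
        (fun x : (∀ i : (A ∪ B : Set ι), X i) => fun i : (A ∩ B : Set ι) =>
          x (Set.inclusion (Set.inter_subset_left.trans Set.subset_union_left) i)) αm
        ((fun x : (∀ i : (A ∪ B : Set ι), X i) => fun i : (A ∩ B : Set ι) =>
          x (Set.inclusion (Set.inter_subset_left.trans Set.subset_union_left) i)) a)
        t).toReal := by
    filter_upwards [hae] with w hw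
    obtain ⟨h1', h2', h3'⟩ := hw
    rw [hcd_pair, hcdf, hcdg, ← h3', ← h1', ← h2', Kernel.prod_apply, Measure.prod_prod,
      ENNReal.toReal_mul]
  exact (e1.symm.trans final).trans (e2.mul e3)
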